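/- Let C be a noncrossing perfect matching of the 2(m+n) boundary points of an m×n rectangle (n points on top and bottom, m on left and right) such that no arc of C has both endpoints on the top side. Then every vertical separating line meets C at most m times. -/
import Mathlib


/-- `f` is a noncrossing perfect matching of the `P` points `0, 1, ..., P-1`
(in circular order): a fixed-point-free involution of the points whose chords
are pairwise noncrossing. -/
def IsNCMatching (P : ℕ) (f : ℕ → ℕ) : Prop :=
  (∀ p, p < P → f p < P) ∧ (∀ p, p < P → f (f p) = p) ∧ (∀ p, p < P → f p ≠ p) ∧
  (∀ p q, p < P → q < P → ¬ (p < q ∧ q < f p ∧ f p < f q))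

/-- Number of arcs of the matching `f` crossing a separating line: the number of
arcs with exactly one endpoint in the side `S`. -/
def lineCross (P : ℕ) (S : ℕ → Prop) [DecidablePred S] (f : ℕ → ℕ) : ℕ :=
  ((Finset.range P).filter (fun p => S p ∧ ¬ S (f p))).card

/-- Boundary points of an `m × n` rectangle, in circular order: `n` top points
`0..n-1` (left to right), `m` right points `n..n+m-1` (top to bottom), `n` bottom
points `n+m..2n+m-1` (right to left), `m` left points `2n+m..2n+2m-1` (bottom to
top).  If no arc of the noncrossing perfect matching `C` has both endpoints on
the top side, then every vertical separating line (the `j`-th one, `1 ≤ j ≤ n-1`,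
having on its left exactly the points `p` with `p < j ∨ 2n+m-j ≤ p`) meets `C`
at most `m` times. -/
theorem vertical_lines_bounded_of_no_top_returns (m n : ℕ) (f : ℕ → ℕ)
    (hC : IsNCMatching (2 * (m + n)) f)
    (htop : ∀ p, p < n → ¬ f p < n) :
    ∀ j, 1 ≤ j → j ≤ n - 1 →
      lineCross (2 * (m + n)) (fun p => p < j ∨ 2 * n + m - j ≤ p) f ≤ m := by
  obtain ⟨hlt, hinv, hne, hnc⟩ := hC
  intro j hj1 hj2
  have hn : 2 ≤ n := by omega
  have hjn : j < n := by omega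
  unfold lineCross
  by_cases hbad : ∃ q, j ≤ q ∧ q < n ∧ 2 * n + m - j ≤ f q
  · -- Case B: some top point of the middle matches across into the left side.
    obtain ⟨q, hq1, hq2, hq3⟩ := hbad
    have key : ∀ p, p < j → 2 * n + m - j ≤ f p := by
      intro p hp
      have hpn : ¬ f p < n := htop p (by omega)
      by_contra hc
      push_neg at hc
      exact hnc p q (by omega) (by omega) ⟨by omega, by omega, by omega⟩
    have himg : (Finset.range j).image f ⊆ Finset.Ico (2*n+m-j) (2*(m+n)) := by
      intro y hy
      simp only [Finset.mem_image, Finset.mem_range] at hy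
      obtain ⟨p, hp, rfl⟩ := hy
      simp only [Finset.mem_Ico]
      exact ⟨key p hp, hlt p (by omega)⟩
    have hsub : (Finset.range (2*(m+n))).filter
        (fun p => (p < j ∨ 2 * n + m - j ≤ p) ∧ ¬(f p < j ∨ 2 * n + m - j ≤ f p))
        ⊆ (Finset.Ico (2*n+m-j) (2*(m+n))) \ ((Finset.range j).image f) := by
      intro p hp
      simp only [Finset.mem_filter, Finset.mem_range] at hp
      obtain ⟨hpP, hpS, hpf⟩ := hp
      push_neg at hpf
      obtain ⟨hf1, hf2⟩ := hpf
      simp only [Finset.mem_sdiff, Finset.mem_Ico, Finset.mem_image, Finset.mem_range]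
      refine ⟨⟨?_, hpP⟩, ?_⟩
      · rcases hpS with h | h
        · exact absurd (key p h) (by omega)
        · exact h
      · rintro ⟨p', hp', rfl⟩
        have h2 := hinv p' (by omega)
        omega
    calc ((Finset.range (2*(m+n))).filter
        (fun p => (p < j ∨ 2 * n + m - j ≤ p) ∧ ¬(f p < j ∨ 2 * n + m - j ≤ f p))).card
        ≤ ((Finset.Ico (2*n+m-j) (2*(m+n))) \ ((Finset.range j).image f)).card :=
          Finset.card_le_card hsub
      _ = (Finset.Ico (2*n+m-j) (2*(m+n))).card - ((Finset.range j).image f).card :=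
          Finset.card_sdiff_of_subset himg
      _ ≤ m := by
          rw [Nat.card_Ico, Finset.card_image_of_injOn (fun a ha b hb hab => by
            simp only [Finset.coe_range, Set.mem_Iio] at ha hb
            have h1 := hinv a (by omega)
            have h2 := hinv b (by omega)
            rw [hab] at h1
            omega)]
          rw [Finset.card_range]
          omega
  · -- Case A: every top point in the middle matches inside the middle.
    push_neg at hbad
    set X := (Finset.range (2*(m+n))).filter
        (fun p => (p < j ∨ 2 * n + m - j ≤ p) ∧ ¬(f p < j ∨ 2 * n + m - j ≤ f p)) with hX
    have hinj : Set.InjOn f X := by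
      intro a ha b hb hab
      simp only [hX, Finset.coe_filter, Set.mem_setOf_eq, Finset.mem_range] at ha hb
      have h1 := hinv a (by omega)
      have h2 := hinv b (by omega)
      rw [hab] at h1
      omega
    have hcard : X.card = (X.image f).card := (Finset.card_image_of_injOn hinj).symm
    have hTsub : Finset.Ico j n ∪ (Finset.Ico j n).image f ⊆ Finset.Ico j (2*n+m-j) := by
      intro y hy
      simp only [Finset.mem_union, Finset.mem_image, Finset.mem_Ico] at hy ⊢
      rcases hy with h | ⟨q, hq, rfl⟩
      · omega
      · have h1 : ¬ f q < n := htop q hq.2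
        have h2 : f q < 2*n+m-j := hbad q hq.1 hq.2
        omega
    have hsub2 : X.image f ⊆ Finset.Ico j (2*n+m-j) \
        (Finset.Ico j n ∪ (Finset.Ico j n).image f) := by
      intro y hy
      simp only [Finset.mem_image, hX, Finset.mem_filter, Finset.mem_range] at hy
      obtain ⟨p, ⟨hpP, hpS, hpf⟩, rfl⟩ := hy
      push_neg at hpf
      obtain ⟨hf1, hf2⟩ := hpf
      simp only [Finset.mem_sdiff, Finset.mem_Ico, Finset.mem_union, Finset.mem_image]
      refine ⟨⟨hf1, hf2⟩, ?_⟩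
      push_neg
      constructor
      · -- f p is not a top point in [j, n)
        intro h1
        by_contra h2
        push_neg at h2
        have hfp := hinv p (by omega)
        have hbq := hbad (f p) h1 h2
        have := htop p (by omega)
        omega
      · intro q hq heq
        have h1 := hinv p (by omega)
        have h2 := hinv q (by omega)
        rw [heq] at h2
        omega
    have hdisj : Disjoint (Finset.Ico j n) ((Finset.Ico j n).image f) := by
      rw [Finset.disjoint_left]
      intro a ha hb
      simp only [Finset.mem_Ico] at ha
      simp only [Finset.mem_image, Finset.mem_Ico] at hb
      obtain ⟨q, hq, rfl⟩ := hb
      exact htop q hq.2 ha.2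
    have hinj2 : Set.InjOn f (Finset.Ico j n) := by
      intro a ha b hb hab
      simp only [Finset.coe_Ico, Set.mem_Ico] at ha hb
      have h1 := hinv a (by omega)
      have h2 := hinv b (by omega)
      rw [hab] at h1
      omega
    rw [hcard]
    calc (X.image f).card
        ≤ (Finset.Ico j (2*n+m-j) \
            (Finset.Ico j n ∪ (Finset.Ico j n).image f)).card :=
          Finset.card_le_card hsub2
      _ = (Finset.Ico j (2*n+m-j)).card -
            (Finset.Ico j n ∪ (Finset.Ico j n).image f).card :=
          Finset.card_sdiff_of_subset hTsub
      _ ≤ m := by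
          simp only [Finset.card_union_of_disjoint hdisj,
            Finset.card_image_of_injOn hinj2, Nat.card_Ico]
          omega
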